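/- Let r > 1 and define u_ε(x) = sin(x/ε^r) for ε ∈ (0,1] and x ∈ ℝ. Then there is no s ∈ ℝ such that the family (u_ε)_{ε∈(0,1]} satisfies the local Zygmund estimates of order s on ℝ. -/

import Mathlib

open MeasureTheory SchwartzMap Filter
open scoped FourierTransform Topology

noncomputable section

/-- A family `(u_ε)` of functions on `ℝ` satisfies the local Zygmund estimates of order `s`
(on `Ω = ℝ`): for every compact `K` and every derivative order `k`, as `ε → 0⁺`,
`sup_{x ∈ K} ‖u_ε^{(k)}(x)‖` is `O(1)` for `k < s`, `O(log(1/ε))` for `k = s` and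
`O(ε^{s-k})` for `k > s`. -/
def ZygLoc1 {F : Type*} [NormedAddCommGroup F] [NormedSpace ℝ F]
    (s : ℝ) (u : ℝ → ℝ → F) : Prop :=
  ∀ K : Set ℝ, IsCompact K → ∀ k : ℕ,
    (((k : ℕ) : ℝ) < s →
      ∃ C, ∀ᶠ ε in 𝓝[>] (0:ℝ), ∀ x ∈ K, ‖iteratedDeriv k (u ε) x‖ ≤ C) ∧
    ((((k : ℕ) : ℝ) = s →
      ∃ C, ∀ᶠ ε in 𝓝[>] (0:ℝ), ∀ x ∈ K, ‖iteratedDeriv k (u ε) x‖ ≤ C * Real.log (1/ε))) ∧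
    (s < ((k : ℕ) : ℝ) →
      ∃ C, ∀ᶠ ε in 𝓝[>] (0:ℝ), ∀ x ∈ K, ‖iteratedDeriv k (u ε) x‖ ≤ C * ε ^ (s - (k : ℕ)))

lemma iteratedDeriv_sin_four_mul_add_one (m : ℕ) :
    iteratedDeriv (4 * m + 1) Real.sin = Real.cos := by
  have d1 : deriv Real.cos = fun x => -Real.sin x := Real.deriv_cos'
  have d2 : deriv (fun x => -Real.sin x) = fun x => -Real.cos x := by
    funext x; rw [deriv.fun_neg, Real.deriv_sin]
  have d3 : deriv (fun x => -Real.cos x) = Real.sin := by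
    funext x; rw [deriv.fun_neg]; simp [Real.deriv_cos]
  induction m with
  | zero => simp [iteratedDeriv_one, Real.deriv_sin]
  | succ m ih =>
    have h4 : 4 * (m + 1) + 1 = (4 * m + 1) + 1 + 1 + 1 + 1 := by ring
    rw [h4, iteratedDeriv_succ, iteratedDeriv_succ, iteratedDeriv_succ, iteratedDeriv_succ, ih,
      d1, d2, d3, Real.deriv_sin]

/-- for `r > 1`, the family `u_ε(x) = sin(x/ε^r)` has no Zygmund regularity. -/
theorem sin_scaled_no_zygLoc (r : ℝ) (hr : 1 < r) :
    ¬ ∃ s : ℝ, ZygLoc1 s (fun ε x => Real.sin (x / ε ^ r)) := by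
  rintro ⟨s, hs⟩
  have hr0 : (0:ℝ) < r - 1 := by linarith
  obtain ⟨m, hm⟩ := exists_nat_gt (|s| + |s| / (r - 1))
  set k : ℕ := 4 * m + 1 with hk
  have hmk : (m : ℝ) ≤ (k : ℝ) := by
    have : m ≤ k := by omega
    exact_mod_cast this
  have habs : 0 ≤ |s| / (r - 1) := div_nonneg (abs_nonneg s) hr0.le
  have hsk : s < (k : ℝ) := by
    have : s ≤ |s| := le_abs_self s
    linarith
  -- the exponent E is negative
  set E : ℝ := -(r * k) - (s - k) with hE
  have hEneg : E < 0 := by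
    have h1 : |s| / (r - 1) < (k : ℝ) := by have := abs_nonneg s; linarith
    have h2 : |s| < (k : ℝ) * (r - 1) := by
      rw [div_lt_iff₀ hr0] at h1; linarith
    have : -s ≤ |s| := neg_le_abs s
    have hk0 : (0:ℝ) ≤ k := Nat.cast_nonneg k
    nlinarith
  obtain ⟨C, hC⟩ := (hs {0} isCompact_singleton k).2.2 hsk
  -- rewrite the bound using the explicit value of the iterated derivative at 0
  have key : ∀ᶠ ε in 𝓝[>] (0:ℝ), ε ^ E ≤ C := by
    filter_upwards [hC, self_mem_nhdsWithin] with ε h1 (hε : 0 < ε)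
    have h0 := h1 0 rfl
    have hcr : (0:ℝ) < ε ^ r := Real.rpow_pos_of_pos hε r
    have hval : iteratedDeriv k (fun x => Real.sin (x / ε ^ r)) 0
        = ((ε ^ r)⁻¹) ^ k := by
      have : (fun x => Real.sin (x / ε ^ r)) = fun x => Real.sin ((ε ^ r)⁻¹ * x) := by
        funext x; rw [div_eq_inv_mul]
      rw [this, iteratedDeriv_comp_const_mul Real.contDiff_sin ((ε ^ r)⁻¹),
        iteratedDeriv_sin_four_mul_add_one]
      simp
    rw [hval] at h0
    have hnorm : ‖((ε ^ r)⁻¹) ^ k‖ = ε ^ (-(r * (k:ℝ))) := by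
      rw [Real.norm_eq_abs, abs_pow, abs_inv, abs_of_pos hcr,
        ← Real.rpow_neg hε.le, ← Real.rpow_natCast (ε ^ (-r)) k,
        ← Real.rpow_mul hε.le, neg_mul]
    rw [hnorm] at h0
    -- divide by ε ^ (s - k)
    have hpow : (0:ℝ) < ε ^ (s - (k:ℝ)) := Real.rpow_pos_of_pos hε _
    have : ε ^ (-(r * (k:ℝ))) * (ε ^ (s - (k:ℝ)))⁻¹ ≤ C := by
      rw [← div_le_iff₀ hpow] at h0
      simpa [div_eq_mul_inv] using h0
    calc ε ^ E = ε ^ (-(r * (k:ℝ))) * (ε ^ (s - (k:ℝ)))⁻¹ := by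
          rw [← Real.rpow_neg hε.le, ← Real.rpow_add hε, hE]; ring_nf
      _ ≤ C := this
  -- but ε ^ E → ∞ as ε → 0⁺
  have htend : Tendsto (fun ε : ℝ => ε ^ E) (𝓝[>] (0:ℝ)) atTop := by
    have h1 : Tendsto (fun ε : ℝ => (ε⁻¹) ^ (-E)) (𝓝[>] (0:ℝ)) atTop :=
      (tendsto_rpow_atTop (by linarith : (0:ℝ) < -E)).comp tendsto_inv_nhdsGT_zero
    refine h1.congr' ?_
    filter_upwards [self_mem_nhdsWithin] with ε (hε : 0 < ε)
    rw [← Real.rpow_neg_one ε, ← Real.rpow_mul hε.le]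
    ring_nf
  have hbig : ∀ᶠ ε in 𝓝[>] (0:ℝ), C < ε ^ E := htend.eventually_gt_atTop C
  obtain ⟨ε, h1, h2⟩ := (key.and hbig).exists
  exact absurd h1 (not_le.mpr h2)
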